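/- Let ω > 0, n ∈ ℕ, and let S be a random variable uniformly distributed on [0,1]. For every t with −π/ω − 2πn/ω ≤ t ≤ 2πn/ω + π/ω, one has 𝔼_S[Γ^cos_n(t; S, ω)] = cos(ωt). -/

import Mathlib

open Real
open scoped BigOperators

/-- `ReLU(t) = max(0, t)`. -/
noncomputable def relu (t : ℝ) : ℝ := max 0 t

/-- `R₄(t; S, ω) = ReLU(t) + ReLU(t - π/ω) - ReLU(t - πS/ω) - ReLU(t - π(1-S)/ω)`. -/
noncomputable def R4 (ω S t : ℝ) : ℝ :=
  relu t + relu (t - π / ω) - relu (t - π * S / ω) - relu (t - π * (1 - S) / ω)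

/-- `Γ^sin(t; S, ω) = (πω/2) sin(πS) [R₄(t; S, ω) - R₄(t - π/ω; S, ω)]`. -/
noncomputable def gammaSin (ω S t : ℝ) : ℝ :=
  π * ω / 2 * Real.sin (π * S) * (R4 ω S t - R4 ω S (t - π / ω))

/-- `Γ^cos_n(t; S, ω) = Σ_{i=-n-1}^{n} Γ^sin(t - 2πi/ω + π/(2ω); S, ω)`. -/
noncomputable def gammaCos (n : ℕ) (ω S t : ℝ) : ℝ :=
  ∑ i ∈ Finset.Icc (-(n : ℤ) - 1) (n : ℤ),
    gammaSin ω S (t - 2 * π * (i : ℝ) / ω + π / (2 * ω))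

lemma relu_continuous : Continuous relu := continuous_const.max continuous_id

lemma relu_of_nonneg {x : ℝ} (h : 0 ≤ x) : relu x = x := max_eq_right h

lemma relu_of_nonpos {x : ℝ} (h : x ≤ 0) : relu x = 0 := max_eq_left h

lemma cont_aux {ω t : ℝ} (hω : ω ≠ 0) :
    Continuous (fun S : ℝ => Real.sin (π * S) * relu (t - π * S / ω)) := by
  exact (Real.continuous_sin.comp (continuous_const.mul continuous_id)).mul
    (relu_continuous.comp (by fun_prop))

/-- antiderivative computation: `∫₀ᵃ sin(πS)(c+dS) dS` -/
lemma integral_sin_linear (a c d : ℝ) :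
    ∫ S in (0:ℝ)..a, Real.sin (π * S) * (c + d * S)
      = c / π - (c + d * a) * Real.cos (π * a) / π + d * Real.sin (π * a) / π ^ 2 := by
  have hπ : (π : ℝ) ≠ 0 := Real.pi_ne_zero
  have hderiv : ∀ S ∈ Set.uIcc (0:ℝ) a,
      HasDerivAt (fun S => -(c + d * S) * Real.cos (π * S) / π + d * Real.sin (π * S) / π ^ 2)
        (Real.sin (π * S) * (c + d * S)) S := by
    intro S _
    have h1 : HasDerivAt (fun S : ℝ => π * S) π S := by
      simpa using (hasDerivAt_id S).const_mul π
    have hcos : HasDerivAt (fun S : ℝ => Real.cos (π * S)) (-Real.sin (π * S) * π) S :=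
      (Real.hasDerivAt_cos (π * S)).comp S h1
    have hsin : HasDerivAt (fun S : ℝ => Real.sin (π * S)) (Real.cos (π * S) * π) S :=
      (Real.hasDerivAt_sin (π * S)).comp S h1
    have hlin : HasDerivAt (fun S : ℝ => -(c + d * S)) (-d) S := by
      have := ((hasDerivAt_const S c).add ((hasDerivAt_id S).const_mul d)).neg
      simp only [id, zero_add, mul_one] at this; exact this
    have h := ((hlin.mul hcos).div_const π).add ((hsin.const_mul d).div_const (π ^ 2))
    refine HasDerivAt.congr_deriv h ?_
    rw [div_add_div _ _ hπ (pow_ne_zero 2 hπ), div_eq_iff (mul_ne_zero hπ (pow_ne_zero 2 hπ))]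
    ring
  have hint : IntervalIntegrable (fun S => Real.sin (π * S) * (c + d * S))
      MeasureTheory.volume 0 a := by
    apply Continuous.intervalIntegrable
    fun_prop
  rw [intervalIntegral.integral_eq_sub_of_hasDerivAt hderiv hint]
  simp [Real.cos_zero, Real.sin_zero]
  ring

lemma int_sin01 : ∫ S in (0:ℝ)..1, Real.sin (π * S) = 2 / π := by
  have h : ∫ S in (0:ℝ)..1, Real.sin (π * S) = ∫ S in (0:ℝ)..1, Real.sin (π * S) * (1 + 0 * S) := by
    congr 1; funext S; ring
  rw [h, integral_sin_linear]
  simp [Real.cos_pi]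
  ring

lemma G_eq {ω : ℝ} (hω : 0 < ω) (t : ℝ) :
    ∫ S in (0:ℝ)..1, Real.sin (π * S) * relu (t - π * S / ω)
      = if t ≤ 0 then 0 else if t ≤ π / ω then t / π - Real.sin (ω * t) / (π * ω)
        else 2 * t / π - 1 / ω := by
  have hπ : (0:ℝ) < π := Real.pi_pos
  by_cases h0 : t ≤ 0
  · rw [if_pos h0]
    rw [intervalIntegral.integral_congr (g := fun _ => (0:ℝ))]
    · simp
    · intro S hS
      rw [Set.uIcc_of_le (by norm_num : (0:ℝ) ≤ 1)] at hS
      have : t - π * S / ω ≤ 0 := by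
        have : 0 ≤ π * S / ω := by
          have := hS.1; positivity
        linarith
      simp [relu_of_nonpos this]
  · push_neg at h0
    rw [if_neg (by linarith)]
    by_cases h1 : t ≤ π / ω
    · rw [if_pos h1]
      set a : ℝ := ω * t / π with ha
      have ha0 : 0 ≤ a := by positivity
      have ha1 : a ≤ 1 := by
        rw [ha, div_le_one hπ]
        calc ω * t ≤ ω * (π / ω) := by nlinarith
          _ = π := by field_simp
      have hπa : π * a = ω * t := by rw [ha]; field_simp
      have hta : π * a / ω = t := by rw [hπa]; field_simp
      have hint1 : IntervalIntegrable (fun S => Real.sin (π * S) * relu (t - π * S / ω))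
          MeasureTheory.volume 0 a := (cont_aux hω.ne').intervalIntegrable _ _
      have hint2 : IntervalIntegrable (fun S => Real.sin (π * S) * relu (t - π * S / ω))
          MeasureTheory.volume a 1 := (cont_aux hω.ne').intervalIntegrable _ _
      rw [← intervalIntegral.integral_add_adjacent_intervals hint1 hint2]
      have e1 : ∫ S in (0:ℝ)..a, Real.sin (π * S) * relu (t - π * S / ω)
          = ∫ S in (0:ℝ)..a, Real.sin (π * S) * (t + (-(π / ω)) * S) := by
        apply intervalIntegral.integral_congr
        intro S hS
        rw [Set.uIcc_of_le ha0] at hS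
        have hle : π * S / ω ≤ π * a / ω := by gcongr; exact hS.2
        have hge : 0 ≤ t - π * S / ω := by rw [hta] at hle; linarith
        show Real.sin (π * S) * relu (t - π * S / ω) = Real.sin (π * S) * (t + -(π / ω) * S)
        rw [relu_of_nonneg hge]
        ring
      have e2 : ∫ S in a..(1:ℝ), Real.sin (π * S) * relu (t - π * S / ω)
          = ∫ S in a..(1:ℝ), (0:ℝ) := by
        apply intervalIntegral.integral_congr
        intro S hS
        rw [Set.uIcc_of_le ha1] at hS
        have hle : π * a / ω ≤ π * S / ω := by gcongr; exact hS.1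
        have hge : t - π * S / ω ≤ 0 := by rw [hta] at hle; linarith
        show Real.sin (π * S) * relu (t - π * S / ω) = 0
        rw [relu_of_nonpos hge, mul_zero]
      rw [e1, e2, integral_sin_linear]
      have h2 : t + -(π / ω) * a = 0 := by
        have : π / ω * a = t := by rw [div_mul_eq_mul_div, hπa]; field_simp
        linarith
      rw [h2, hπa]
      simp
      field_simp
      ring
    · push_neg at h1
      rw [if_neg (by linarith)]
      have e1 : ∫ S in (0:ℝ)..1, Real.sin (π * S) * relu (t - π * S / ω)
          = ∫ S in (0:ℝ)..1, Real.sin (π * S) * (t + (-(π / ω)) * S) := by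
        apply intervalIntegral.integral_congr
        intro S hS
        rw [Set.uIcc_of_le (by norm_num : (0:ℝ) ≤ 1)] at hS
        have hle : π * S / ω ≤ π * 1 / ω := by gcongr; exact hS.2
        have hge : 0 ≤ t - π * S / ω := by
          have e : π * 1 / ω = π / ω := by ring
          rw [e] at hle
          linarith
        show Real.sin (π * S) * relu (t - π * S / ω) = Real.sin (π * S) * (t + -(π / ω) * S)
        rw [relu_of_nonneg hge]
        ring
      rw [e1, integral_sin_linear]
      simp [Real.cos_pi, Real.sin_pi, mul_one]
      field_simp
      ring

lemma G'_eq {ω : ℝ} (hω : 0 < ω) (t : ℝ) :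
    ∫ S in (0:ℝ)..1, Real.sin (π * S) * relu (t - π * (1 - S) / ω)
      = if t ≤ 0 then 0 else if t ≤ π / ω then t / π - Real.sin (ω * t) / (π * ω)
        else 2 * t / π - 1 / ω := by
  have e : ∫ S in (0:ℝ)..1, Real.sin (π * S) * relu (t - π * (1 - S) / ω)
      = ∫ S in (0:ℝ)..1, (fun x => Real.sin (π * x) * relu (t - π * x / ω)) (1 - S) := by
    apply intervalIntegral.integral_congr
    intro S _
    simp only
    have : π * (1 - S) = π - π * S := by ring
    rw [this, Real.sin_pi_sub]
  rw [e, intervalIntegral.integral_comp_sub_left (fun x => Real.sin (π * x) * relu (t - π * x / ω)) 1]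
  simp only [sub_self, sub_zero]
  exact G_eq hω t

noncomputable def Fval (ω t : ℝ) : ℝ := if 0 < t ∧ t ≤ π / ω then Real.sin (ω * t) else 0

lemma intF {ω : ℝ} (hω : 0 < ω) (t : ℝ) :
    ∫ S in (0:ℝ)..1, π * ω / 2 * Real.sin (π * S) * R4 ω S t = Fval ω t := by
  have hπ : (0:ℝ) < π := Real.pi_pos
  have hsplit : (fun S : ℝ => π * ω / 2 * Real.sin (π * S) * R4 ω S t)
      = fun S : ℝ => ((π * ω / 2 * (relu t + relu (t - π / ω))) * Real.sin (π * S)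
          - π * ω / 2 * (Real.sin (π * S) * relu (t - π * S / ω)))
          - π * ω / 2 * (Real.sin (π * S) * relu (t - π * (1 - S) / ω)) := by
    funext S; unfold R4; ring
  have hi1 : IntervalIntegrable
      (fun S : ℝ => (π * ω / 2 * (relu t + relu (t - π / ω))) * Real.sin (π * S))
      MeasureTheory.volume 0 1 := by
    apply Continuous.intervalIntegrable; fun_prop
  have hi2 : IntervalIntegrable
      (fun S : ℝ => π * ω / 2 * (Real.sin (π * S) * relu (t - π * S / ω)))
      MeasureTheory.volume 0 1 := by
    apply Continuous.intervalIntegrable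
    exact continuous_const.mul (cont_aux hω.ne')
  have hi3 : IntervalIntegrable
      (fun S : ℝ => π * ω / 2 * (Real.sin (π * S) * relu (t - π * (1 - S) / ω)))
      MeasureTheory.volume 0 1 := by
    apply Continuous.intervalIntegrable
    apply continuous_const.mul
    exact (Real.continuous_sin.comp (continuous_const.mul continuous_id)).mul
      (relu_continuous.comp (by fun_prop))
  rw [hsplit, intervalIntegral.integral_sub (hi1.sub hi2) hi3,
    intervalIntegral.integral_sub hi1 hi2,
    intervalIntegral.integral_const_mul, intervalIntegral.integral_const_mul,
    intervalIntegral.integral_const_mul, int_sin01, G_eq hω, G'_eq hω]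
  unfold Fval
  by_cases h0 : t ≤ 0
  · rw [if_pos h0, if_neg (by intro h; linarith [h.1])]
    rw [relu_of_nonpos h0, relu_of_nonpos (by linarith [div_pos hπ hω])]
    ring
  · push_neg at h0
    by_cases h1 : t ≤ π / ω
    · rw [if_neg (by linarith), if_pos h1, if_pos ⟨h0, h1⟩]
      rw [relu_of_nonneg h0.le, relu_of_nonpos (by linarith)]
      field_simp
      ring
    · push_neg at h1
      rw [if_neg (by linarith), if_neg (by linarith), if_neg (by intro h; linarith [h.2])]
      rw [relu_of_nonneg h0.le, relu_of_nonneg (by linarith)]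
      field_simp
      ring

lemma gammaSin_cont {ω t : ℝ} (hω : ω ≠ 0) : Continuous (fun S => gammaSin ω S t) := by
  unfold gammaSin R4 relu
  fun_prop

lemma intGammaSin {ω : ℝ} (hω : 0 < ω) (t : ℝ) :
    ∫ S in (0:ℝ)..1, gammaSin ω S t
      = if 0 ≤ t ∧ t < 2 * π / ω then Real.sin (ω * t) else 0 := by
  have hπ : (0:ℝ) < π := Real.pi_pos
  have hpw : (0:ℝ) < π / ω := by positivity
  have h2e : 2 * π / ω = π / ω + π / ω := by ring
  have hsplit : (fun S : ℝ => gammaSin ω S t)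
      = fun S : ℝ => π * ω / 2 * Real.sin (π * S) * R4 ω S t
          - π * ω / 2 * Real.sin (π * S) * R4 ω S (t - π / ω) := by
    funext S; unfold gammaSin; ring
  have hiA : IntervalIntegrable (fun S : ℝ => π * ω / 2 * Real.sin (π * S) * R4 ω S t)
      MeasureTheory.volume 0 1 := by
    apply Continuous.intervalIntegrable
    unfold R4 relu; fun_prop
  have hiB : IntervalIntegrable (fun S : ℝ => π * ω / 2 * Real.sin (π * S) * R4 ω S (t - π / ω))
      MeasureTheory.volume 0 1 := by
    apply Continuous.intervalIntegrable
    unfold R4 relu; fun_prop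
  rw [hsplit, intervalIntegral.integral_sub hiA hiB, intF hω, intF hω]
  unfold Fval
  by_cases h0 : t ≤ 0
  · rw [if_neg (by intro h; linarith [h.1]), if_neg (by intro h; linarith [h.1])]
    by_cases he : 0 ≤ t ∧ t < 2 * π / ω
    · have : t = 0 := le_antisymm h0 he.1
      rw [if_pos he, this]
      simp
    · rw [if_neg he]; ring
  · push_neg at h0
    by_cases h1 : t ≤ π / ω
    · rw [if_pos ⟨h0, h1⟩, if_neg (by intro h; linarith [h.1])]
      rw [if_pos ⟨h0.le, by linarith⟩]
      ring
    · push_neg at h1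
      rw [if_neg (show ¬(0 < t ∧ t ≤ π / ω) by intro h; linarith [h.2])]
      have hsub : ω * (t - π / ω) = ω * t - π := by field_simp
      by_cases h2 : t < 2 * π / ω
      · rw [if_pos (show 0 < t - π / ω ∧ t - π / ω ≤ π / ω from ⟨by linarith, by linarith⟩),
          if_pos (show (0:ℝ) ≤ t ∧ t < 2 * π / ω from ⟨by linarith, h2⟩)]
        rw [hsub, Real.sin_sub_pi]
        ring
      · push_neg at h2
        rw [if_neg (show ¬((0:ℝ) ≤ t ∧ t < 2 * π / ω) by intro h; linarith [h.2])]
        by_cases h3 : t - π / ω ≤ π / ω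
        · have ht2 : t = 2 * π / ω := le_antisymm (by linarith) h2
          rw [if_pos (show 0 < t - π / ω ∧ t - π / ω ≤ π / ω from ⟨by linarith, h3⟩)]
          rw [hsub, Real.sin_sub_pi, ht2]
          have e2 : ω * (2 * π / ω) = 2 * π := by field_simp
          rw [e2, Real.sin_two_pi]
          ring
        · rw [if_neg (show ¬(0 < t - π / ω ∧ t - π / ω ≤ π / ω) by intro h; exact h3 h.2)]
          ring

/-- **Unbiasedness of the random ReLU estimator for cosine.** For
`-π/ω - 2πn/ω ≤ t ≤ 2πn/ω + π/ω` and `S ~ Unif[0,1]`,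
`𝔼_S[Γ^cos_n(t; S, ω)] = cos(ωt)`. -/
theorem gammaCos_expectation (ω : ℝ) (hω : 0 < ω) (n : ℕ) (t : ℝ)
    (ht₁ : -(π / ω) - 2 * π * (n : ℝ) / ω ≤ t) (ht₂ : t ≤ 2 * π * (n : ℝ) / ω + π / ω) :
    ∫ S in (0 : ℝ)..1, gammaCos n ω S t = Real.cos (ω * t) := by
  have hπ : (0:ℝ) < π := Real.pi_pos
  have h2π : (0:ℝ) < 2 * π := by positivity
  unfold gammaCos
  rw [intervalIntegral.integral_finset_sum (fun i _ => (gammaSin_cont hω.ne').intervalIntegrable _ _)]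
  have hval : ∀ i : ℤ, (∫ S in (0:ℝ)..1, gammaSin ω S (t - 2 * π * (i : ℝ) / ω + π / (2 * ω)))
      = if 0 ≤ t - 2 * π * (i : ℝ) / ω + π / (2 * ω)
          ∧ t - 2 * π * (i : ℝ) / ω + π / (2 * ω) < 2 * π / ω
        then Real.cos (ω * t) else 0 := by
    intro i
    rw [intGammaSin hω]
    congr 1
    have e : ω * (t - 2 * π * (i : ℝ) / ω + π / (2 * ω)) = (ω * t - (i : ℝ) * (2 * π)) + π / 2 := by
      field_simp
    rw [e, Real.sin_add_pi_div_two, Real.cos_sub_int_mul_two_pi]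
  simp only [hval]
  set X : ℝ := (ω * t + π / 2) / (2 * π) with hX
  set i₀ : ℤ := ⌊X⌋ with hi₀
  have key : ∀ i : ℤ, (0 ≤ t - 2 * π * (i : ℝ) / ω + π / (2 * ω)
      ∧ t - 2 * π * (i : ℝ) / ω + π / (2 * ω) < 2 * π / ω) ↔ ((i:ℝ) ≤ X ∧ X - 1 < (i:ℝ)) := by
    intro i
    have e : t - 2 * π * (i : ℝ) / ω + π / (2 * ω) = (ω * t + π / 2 - 2 * π * i) / ω := by
      field_simp
      ring
    rw [e]
    constructor
    · rintro ⟨ha, hb⟩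
      have ha' : 0 ≤ ω * t + π / 2 - 2 * π * i := by
        by_contra hc
        push_neg at hc
        have : (ω * t + π / 2 - 2 * π * i) / ω < 0 := div_neg_of_neg_of_pos hc hω
        linarith
      have hb' : ω * t + π / 2 - 2 * π * i < 2 * π := by
        have := (div_lt_div_iff_of_pos_right hω).mp (by
          rw [show (2:ℝ) * π / ω = (2 * π) / ω from rfl] at hb; exact hb)
        linarith
      constructor
      · rw [hX, le_div_iff₀ h2π]; linarith
      · rw [hX]
        have : X * (2 * π) = ω * t + π / 2 := by rw [hX]; field_simp
        nlinarith [this]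
    · rintro ⟨ha, hb⟩
      have hXv : X * (2 * π) = ω * t + π / 2 := by rw [hX]; field_simp
      have ha' : 2 * π * i ≤ ω * t + π / 2 := by nlinarith
      have hb' : ω * t + π / 2 - 2 * π < 2 * π * i := by nlinarith
      constructor
      · exact div_nonneg (by linarith) hω.le
      · exact (div_lt_div_iff_of_pos_right hω).mpr (by linarith)
  have hmem : i₀ ∈ Finset.Icc (-(n : ℤ) - 1) (n : ℤ) := by
    rw [Finset.mem_Icc]
    have hfl : (i₀ : ℝ) ≤ X := Int.floor_le X
    have hfg : X - 1 < (i₀ : ℝ) := by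
      have := Int.lt_floor_add_one X; linarith
    have hXub : X ≤ (n : ℝ) + 3 / 4 := by
      rw [hX, div_le_iff₀ h2π]
      have : ω * t ≤ 2 * π * n + π := by
        have h := mul_le_mul_of_nonneg_left ht₂ hω.le
        have e : ω * (2 * π * (n:ℝ) / ω + π / ω) = 2 * π * n + π := by field_simp
        rw [e] at h; exact h
      nlinarith
    have hXlb : -(n : ℝ) - 3 / 4 ≤ X := by
      rw [hX, le_div_iff₀ h2π]
      have : -π - 2 * π * n ≤ ω * t := by
        have h := mul_le_mul_of_nonneg_left ht₁ hω.le
        have e : ω * (-(π / ω) - 2 * π * (n:ℝ) / ω) = -π - 2 * π * n := by field_simp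
        rw [e] at h; exact h
      nlinarith
    constructor
    · have : (-(n:ℝ) - 2 : ℝ) < (i₀ : ℝ) := by linarith
      have := (by exact_mod_cast this : (-(n:ℤ) - 2) < i₀)
      omega
    · have : (i₀ : ℝ) < (n : ℝ) + 1 := by linarith
      exact_mod_cast (by exact_mod_cast this : (i₀ : ℤ) < (n:ℤ) + 1) |> Int.lt_add_one_iff.mp
  rw [Finset.sum_eq_single_of_mem i₀ hmem]
  · rw [if_pos ((key i₀).mpr ⟨Int.floor_le X, by linarith [Int.lt_floor_add_one X]⟩)]
  · intro j _ hj
    rw [if_neg]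
    intro hc
    rw [key j] at hc
    apply hj
    have h1 : j ≤ i₀ := by
      rw [hi₀, Int.le_floor]; exact hc.1
    have h2 : i₀ ≤ j := by
      have : (i₀ : ℝ) < (j : ℝ) + 1 := by
        have := Int.floor_le X; linarith [hc.2]
      exact_mod_cast Int.lt_add_one_iff.mp (by exact_mod_cast this)
    omega
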